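/- Let m, r ≥ 1 and b ≥ 2 be integers. If m is divisible by b^r − 1, then the sum of the base-b digits of m satisfies s_b(m) ≥ (b−1)·r. -/

import Mathlib

open Nat

/-- Digit sum formula with flexible range. -/
lemma aux_sum_formula (b n K : ℕ) (hb : 2 ≤ b) (hK : n < b ^ K) :
    (Nat.digits b n).sum + (b - 1) * ∑ i ∈ Finset.range K, n / b ^ (i + 1) = n := by
  rcases Nat.eq_zero_or_pos n with rfl | hn
  · simp
  have h1 : (b - 1) * ∑ i ∈ Finset.range (Nat.log b n).succ, n / b ^ (i + 1)
      = n - (Nat.digits b n).sum := Nat.sub_one_mul_sum_log_div_pow_eq_sub_sum_digits n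
  have hlog : Nat.log b n < K := Nat.log_lt_of_lt_pow (by omega) hK
  have hsum : ∑ i ∈ Finset.range K, n / b ^ (i + 1)
      = ∑ i ∈ Finset.range (Nat.log b n).succ, n / b ^ (i + 1) := by
    rw [← Finset.sum_range_add_sum_Ico _ (show (Nat.log b n).succ ≤ K by omega)]
    have : ∑ i ∈ Finset.Ico (Nat.log b n).succ K, n / b ^ (i + 1) = 0 := by
      apply Finset.sum_eq_zero
      intro i hi
      simp only [Finset.mem_Ico] at hi
      apply Nat.div_eq_of_lt
      calc n < b ^ (Nat.log b n + 1) := Nat.lt_pow_succ_log_self (by omega) n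
        _ ≤ b ^ (i + 1) := Nat.pow_le_pow_right (by omega) (by omega)
    omega
  have hle : (Nat.digits b n).sum ≤ n := by
    conv_rhs => rw [← Nat.ofDigits_digits b n]
    exact Nat.sum_le_ofDigits _ (by omega)
  rw [hsum]
  omega

/-- Subadditivity of digit sums. -/
lemma aux_subadd (b x y : ℕ) (hb : 2 ≤ b) :
    (Nat.digits b (x + y)).sum ≤ (Nat.digits b x).sum + (Nat.digits b y).sum := by
  set K := x + y + 1 with hK
  have hbK : x + y < b ^ K := lt_of_lt_of_le (by omega) (Nat.lt_pow_self (n := K) (by omega)).le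
  have h1 := aux_sum_formula b (x + y) K hb hbK
  have h2 := aux_sum_formula b x K hb (by omega)
  have h3 := aux_sum_formula b y K hb (by omega)
  have hsum : ∑ i ∈ Finset.range K, x / b ^ (i + 1) + ∑ i ∈ Finset.range K, y / b ^ (i + 1)
      ≤ ∑ i ∈ Finset.range K, (x + y) / b ^ (i + 1) := by
    rw [← Finset.sum_add_distrib]
    exact Finset.sum_le_sum fun i _ => Nat.add_div_le_add_div ..
  have := Nat.mul_le_mul_left (b - 1) hsum
  rw [Nat.mul_add] at this
  omega

/-- Splitting digit sums on a power of the base. -/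
lemma aux_split (b r c q : ℕ) (hb : 2 ≤ b) (hc : c < b ^ r) (hq : 0 < q) :
    (Nat.digits b (c + b ^ r * q)).sum = (Nat.digits b c).sum + (Nat.digits b q).sum := by
  have hlen : (Nat.digits b c).length ≤ r := by
    rcases Nat.eq_zero_or_pos c with rfl | hc0
    · simp
    · rw [Nat.digits_len b c (by omega) (by omega)]
      have : Nat.log b c < r := Nat.log_lt_of_lt_pow (by omega) hc
      omega
  set L := (Nat.digits b c).length with hL
  have key : c + b ^ r * q = c + b ^ L * (b ^ (r - L) * q) := by
    rw [← Nat.mul_assoc, ← pow_add]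
    have : L + (r - L) = r := by omega
    rw [this]
  rw [key, ← Nat.digits_append_digits (b := b) (by omega),
    Nat.digits_base_pow_mul (by omega) hq]
  simp

/-- Digits of b^r - 1. -/
lemma aux_repunit (b r : ℕ) (hb : 2 ≤ b) :
    Nat.digits b (b ^ r - 1) = List.replicate r (b - 1) := by
  induction r with
  | zero => simp
  | succ r ih =>
    have hpow : 1 ≤ b ^ r := Nat.one_le_pow _ _ (by omega)
    have heq : b ^ (r + 1) - 1 = (b - 1) + b * (b ^ r - 1) := by
      have h1 : b ^ (r + 1) = b * b ^ r := by ring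
      have h2 : b * (b ^ r - 1) + b * 1 = b * b ^ r := by
        rw [← Nat.mul_add]
        congr 1
        omega
      omega
    rw [heq, Nat.digits_def' (by omega : 1 < b) (by omega)]
    have hmod : ((b - 1) + b * (b ^ r - 1)) % b = b - 1 := by
      rw [Nat.add_mul_mod_self_left, Nat.mod_eq_of_lt (by omega)]
    have hdiv : ((b - 1) + b * (b ^ r - 1)) / b = b ^ r - 1 := by
      rw [Nat.add_mul_div_left _ _ (by omega : 0 < b), Nat.div_eq_of_lt (by omega)]
      omega
    rw [hmod, hdiv, ih, List.replicate_succ]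

theorem stmt_7 (b r m : ℕ) (hb : 2 ≤ b) (hr : 1 ≤ r) (hm : 1 ≤ m)
    (hdvd : (b ^ r - 1) ∣ m) :
    (Nat.digits b m).sum ≥ (b - 1) * r := by
  induction m using Nat.strong_induction_on with
  | _ m IH =>
  have hpow : 2 ≤ b ^ r := by
    calc 2 ≤ b := hb
      _ = b ^ 1 := (pow_one b).symm
      _ ≤ b ^ r := Nat.pow_le_pow_right (by omega) hr
  rcases lt_or_ge m (b ^ r) with hlt | hge
  · -- m = b^r - 1
    have hle : b ^ r - 1 ≤ m := Nat.le_of_dvd (by omega) hdvd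
    have hmeq : m = b ^ r - 1 := by omega
    rw [hmeq, aux_repunit b r hb]
    simp [List.sum_replicate, Nat.mul_comm]
  · -- split
    obtain ⟨q, c, hq1, hclt, hmq⟩ : ∃ q c, 1 ≤ q ∧ c < b ^ r ∧ m = c + b ^ r * q :=
      ⟨m / b ^ r, m % b ^ r, Nat.one_le_div_iff (by omega) |>.mpr hge,
        Nat.mod_lt _ (by omega), (Nat.mod_add_div m (b ^ r)).symm⟩
    have hsplit : (Nat.digits b m).sum = (Nat.digits b c).sum + (Nat.digits b q).sum := by
      rw [hmq]; exact aux_split b r c q hb hclt (by omega)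
    have h0 : (b ^ r - 1) * q + q = b ^ r * q := by
      calc (b ^ r - 1) * q + q = ((b ^ r - 1) + 1) * q := by ring
        _ = b ^ r * q := by rw [Nat.sub_add_cancel (by omega)]
    have h1 : q ≤ b ^ r * q := Nat.le_mul_of_pos_left q (by omega)
    have h2 : b ^ r - 1 ≤ (b ^ r - 1) * q := Nat.le_mul_of_pos_right _ hq1
    have hlt' : c + q < m := by omega
    have hdvd' : (b ^ r - 1) ∣ (c + q) := by
      have heq2 : c + q = m - (b ^ r - 1) * q := by omega
      rw [heq2]
      exact Nat.dvd_sub hdvd (dvd_mul_right _ _)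
    have hIH := IH (c + q) hlt' (by omega) hdvd'
    have hsub := aux_subadd b c q hb
    omega
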